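/- For the GRP-TB-KP innovation s̃_{k+1} = β(1−(p+q))·((1−(p+q))F_k(C − θ̂_kᵀφ_k) + q − s_{k+1}) with θ̂_k being F_k-measurable, the conditional expectation satisfies, almost surely, E[s̃_{k+1} | F_k] = β(1 − p − q)² ( F_k(C − φ_kᵀθ̂_k) − F_k(C − φ_kᵀθ) ). -/

import Mathlib

open MeasureTheory Filter Real
open scoped RealInnerProductSpace Topology

open scoped ENNReal

/-- Freezing lemma: if the conditional "CDF" of `Y` given `m` is deterministic
(equivalently, every event `{Y ≤ x}` is independent of `m`), then for an
`m`-measurable `X` one has `E[1_{Y ≤ X} | m] = F(X)` a.e., where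
`F x = μ {Y ≤ x}`. -/
theorem freeze_aux
    {Ω : Type*} {m m0 : MeasurableSpace Ω} (hm : m ≤ m0)
    {μ : Measure Ω} [IsProbabilityMeasure μ]
    {Y : Ω → ℝ} (hY : Measurable Y)
    (hind : ∀ (x : ℝ) (A : Set Ω), MeasurableSet[m] A →
      μ (A ∩ {ω | Y ω ≤ x}) = μ {ω | Y ω ≤ x} * μ A)
    {X : Ω → ℝ} (hX : Measurable[m] X) :
    μ[fun ω => if Y ω ≤ X ω then (1 : ℝ) else 0 | m]
      =ᵐ[μ] fun ω => (μ {ω' | Y ω' ≤ X ω}).toReal := by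
  set G : ℝ → ℝ≥0∞ := fun t => μ {ω | Y ω ≤ t} with hGdef
  have hGmono : Monotone G := fun a b hab => measure_mono fun ω hω => le_trans hω hab
  have hGmeas : Measurable G := hGmono.measurable
  have hGle : ∀ t, G t ≤ 1 := fun t => prob_le_one
  have hXm0 : Measurable X := hX.mono hm le_rfl
  set Xn : ℕ → Ω → ℝ := fun n ω => (⌈X ω * 2 ^ n⌉ : ℝ) / 2 ^ n with hXndef
  have h2pos : ∀ n : ℕ, (0 : ℝ) < 2 ^ n := fun n => by positivity
  have hle : ∀ n ω, X ω ≤ Xn n ω := by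
    intro n ω
    rw [hXndef, le_div_iff₀ (h2pos n)]
    exact Int.le_ceil _
  have hub : ∀ n ω, Xn n ω ≤ X ω + (2 ^ n)⁻¹ := by
    intro n ω
    rw [hXndef, div_le_iff₀ (h2pos n)]
    have h1 := (Int.ceil_lt_add_one (X ω * 2 ^ n)).le
    have h2 : (X ω * 2 ^ n + 1) = (X ω + (2 ^ n)⁻¹) * 2 ^ n := by
      field_simp
    linarith [h1, h2.le, h2.ge]
  have hanti : ∀ ω, Antitone fun n => Xn n ω := by
    intro ω
    refine antitone_nat_of_succ_le fun n => ?_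
    simp only [hXndef]
    rw [div_le_div_iff₀ (h2pos (n + 1)) (h2pos n)]
    have h1 : (⌈X ω * 2 ^ (n + 1)⌉ : ℤ) ≤ 2 * ⌈X ω * 2 ^ n⌉ := by
      refine Int.ceil_le.mpr ?_
      push_cast
      have hX2 : X ω * 2 ^ (n + 1) = X ω * 2 ^ n * 2 := by ring
      rw [hX2]
      linarith [Int.le_ceil (X ω * 2 ^ n)]
    have h1' : (⌈X ω * 2 ^ (n + 1)⌉ : ℝ) ≤ 2 * ⌈X ω * 2 ^ n⌉ := by exact_mod_cast h1
    calc (⌈X ω * 2 ^ (n + 1)⌉ : ℝ) * 2 ^ n ≤ 2 * ⌈X ω * 2 ^ n⌉ * 2 ^ n :=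
          mul_le_mul_of_nonneg_right h1' (h2pos n).le
      _ = (⌈X ω * 2 ^ n⌉ : ℝ) * 2 ^ (n + 1) := by rw [pow_succ]; ring
  have hlim0 : Tendsto (fun n : ℕ => ((2 : ℝ) ^ n)⁻¹) atTop (𝓝 0) := by
    simpa [inv_pow] using
      tendsto_pow_atTop_nhds_zero_of_lt_one (by norm_num : (0:ℝ) ≤ 2⁻¹)
        (by norm_num : (2:ℝ)⁻¹ < 1)
  have hforall : ∀ (t : ℝ) ω, (∀ n, t ≤ Xn n ω) → t ≤ X ω := by
    intro t ω h
    have htends : Tendsto (fun n : ℕ => X ω + (2 ^ n)⁻¹) atTop (𝓝 (X ω)) := by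
      simpa using tendsto_const_nhds.add hlim0
    exact ge_of_tendsto htends (Eventually.of_forall fun n => (h n).trans (hub n ω))
  have hceilmeas : ∀ n : ℕ, Measurable[m] fun ω => (⌈X ω * 2 ^ n⌉ : ℤ) := fun n =>
    Int.measurable_ceil.comp (hX.mul_const _)
  have hXnmeas : ∀ n, Measurable[m] (Xn n) := by
    intro n
    simp only [hXndef]
    exact (measurable_from_top.comp (hceilmeas n)).div_const _
  have hlevel : ∀ (n : ℕ) (z : ℤ), MeasurableSet[m] {ω | ⌈X ω * 2 ^ n⌉ = z} := by
    intro n z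
    exact hceilmeas n (measurableSet_singleton z)
  -- the key identity
  have hstar : ∀ A : Set Ω, MeasurableSet[m] A →
      μ (A ∩ {ω | Y ω ≤ X ω}) = ∫⁻ ω in A, G (X ω) ∂μ := by
    intro A hA
    have hAm0 : MeasurableSet A := hm _ hA
    have hn : ∀ n, μ (A ∩ {ω | Y ω ≤ Xn n ω}) = ∫⁻ ω in A, G (Xn n ω) ∂μ := by
      intro n
      set c : ℤ → ℝ := fun z => (z : ℝ) / 2 ^ n with hcdef
      set Az : ℤ → Set Ω := fun z => A ∩ {ω | ⌈X ω * 2 ^ n⌉ = z} with hAzdef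
      have hAzm : ∀ z, MeasurableSet[m] (Az z) := fun z => hA.inter (hlevel n z)
      have hAzm0 : ∀ z, MeasurableSet (Az z) := fun z => hm _ (hAzm z)
      have hdisj : Pairwise (Function.onFun Disjoint Az) := by
        intro i j hij
        refine Set.disjoint_left.mpr fun ω hi hj => hij ?_
        have hi2 : ⌈X ω * 2 ^ n⌉ = i := hi.2
        have hj2 : ⌈X ω * 2 ^ n⌉ = j := hj.2
        exact hi2.symm.trans hj2
      have hcover : (⋃ z, Az z) = A := by
        ext ω
        simp [hAzdef]
      have hXn_on : ∀ z ω, ω ∈ Az z → Xn n ω = c z := by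
        intro z ω hω
        simp only [hXndef, hcdef]
        rw [hω.2]
      have hL : A ∩ {ω | Y ω ≤ Xn n ω} = ⋃ z, Az z ∩ {ω | Y ω ≤ c z} := by
        ext ω
        constructor
        · rintro ⟨hA', hY'⟩
          refine Set.mem_iUnion.mpr ⟨⌈X ω * 2 ^ n⌉, ⟨⟨hA', rfl⟩, ?_⟩⟩
          have hc1 := hXn_on ⌈X ω * 2 ^ n⌉ ω ⟨hA', rfl⟩
          simp only [Set.mem_setOf_eq, ← hc1]
          exact hY'
        · intro hω
          obtain ⟨z, hz, hY'⟩ := Set.mem_iUnion.mp hω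
          exact ⟨hz.1, by rw [Set.mem_setOf_eq, hXn_on z ω hz]; exact hY'⟩
      have hLHS : μ (A ∩ {ω | Y ω ≤ Xn n ω}) = ∑' z : ℤ, G (c z) * μ (Az z) := by
        rw [hL, measure_iUnion (hdisj.mono fun i j h => h.mono
              Set.inter_subset_left Set.inter_subset_left)
            (fun z => (hAzm0 z).inter (measurableSet_le hY measurable_const))]
        exact tsum_congr fun z => hind (c z) (Az z) (hAzm z)
      have hRHS : ∫⁻ ω in A, G (Xn n ω) ∂μ = ∑' z : ℤ, G (c z) * μ (Az z) := by
        conv_lhs => rw [← hcover]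
        rw [lintegral_iUnion hAzm0 hdisj]
        refine tsum_congr fun z => ?_
        have hconst : ∫⁻ ω in Az z, G (Xn n ω) ∂μ = ∫⁻ _ω in Az z, G (c z) ∂μ :=
          setLIntegral_congr_fun (hAzm0 z)
            (fun ω hω => by rw [hXn_on z ω hω])
        rw [hconst, setLIntegral_const]
      rw [hLHS, hRHS]
    have hLlim : Tendsto (fun n => μ (A ∩ {ω | Y ω ≤ Xn n ω})) atTop
        (𝓝 (μ (A ∩ {ω | Y ω ≤ X ω}))) := by
      have h1 : (⋂ n, A ∩ {ω | Y ω ≤ Xn n ω}) = A ∩ {ω | Y ω ≤ X ω} := by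
        ext ω
        simp only [Set.mem_iInter, Set.mem_inter_iff, Set.mem_setOf_eq]
        constructor
        · intro h
          exact ⟨(h 0).1, hforall _ _ fun n => (h n).2⟩
        · intro h n
          exact ⟨h.1, h.2.trans (hle n ω)⟩
      rw [← h1]
      refine tendsto_measure_iInter_atTop
        (fun n => (hAm0.inter (measurableSet_le hY
          ((hXnmeas n).mono hm le_rfl))).nullMeasurableSet)
        (fun i j hij => Set.inter_subset_inter_right _
          fun ω hω => le_trans hω (hanti ω hij))
        ⟨0, measure_ne_top μ _⟩
    have hptw : ∀ ω, Tendsto (fun n => G (Xn n ω)) atTop (𝓝 (G (X ω))) := by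
      intro ω
      have h1 : (⋂ n, {ω' | Y ω' ≤ Xn n ω}) = {ω' | Y ω' ≤ X ω} := by
        ext ω'
        simp only [Set.mem_iInter, Set.mem_setOf_eq]
        exact ⟨fun h => hforall _ _ h, fun h n => h.trans (hle n ω)⟩
      have h2 := tendsto_measure_iInter_atTop (μ := μ)
        (s := fun n => {ω' | Y ω' ≤ Xn n ω})
        (fun n => (measurableSet_le hY measurable_const).nullMeasurableSet)
        (fun i j hij => fun ω' hω' => le_trans hω' (hanti ω hij))
        ⟨0, measure_ne_top μ _⟩
      rw [h1] at h2
      exact h2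
    have hRlim : Tendsto (fun n => ∫⁻ ω in A, G (Xn n ω) ∂μ) atTop
        (𝓝 (∫⁻ ω in A, G (X ω) ∂μ)) := by
      refine tendsto_lintegral_of_dominated_convergence (fun _ => 1)
        (fun n => hGmeas.comp ((hXnmeas n).mono hm le_rfl))
        (fun n => ae_of_all _ fun ω => hGle _) ?_
        (ae_of_all _ fun ω => hptw ω)
      rw [lintegral_one]
      exact measure_ne_top _ _
    have := hLlim
    rw [show (fun n => μ (A ∩ {ω | Y ω ≤ Xn n ω}))
        = fun n => ∫⁻ ω in A, G (Xn n ω) ∂μ from funext hn] at this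
    exact tendsto_nhds_unique this hRlim
  -- conclude via uniqueness of conditional expectation
  set T : Set Ω := {ω | Y ω ≤ X ω} with hTdef
  have hT : MeasurableSet T := measurableSet_le hY hXm0
  have hITE : (fun ω => if Y ω ≤ X ω then (1 : ℝ) else 0)
      = T.indicator (fun _ => 1) := by
    funext ω
    simp [hTdef, Set.indicator_apply]
  have hfind : Integrable (fun ω => if Y ω ≤ X ω then (1 : ℝ) else 0) μ := by
    rw [hITE]
    exact (integrable_const 1).indicator hT
  have hgmeas_m : Measurable[m] fun ω => (μ {ω' | Y ω' ≤ X ω}).toReal :=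
    ENNReal.measurable_toReal.comp (hGmeas.comp hX)
  have hgbdd : ∀ ω, ‖(μ {ω' | Y ω' ≤ X ω}).toReal‖ ≤ 1 := by
    intro ω
    rw [Real.norm_eq_abs, abs_of_nonneg ENNReal.toReal_nonneg]
    have h1 : (G (X ω)).toReal ≤ (1 : ℝ≥0∞).toReal :=
      ENNReal.toReal_mono ENNReal.one_ne_top (hGle (X ω))
    simpa using h1
  have hgint : Integrable (fun ω => (μ {ω' | Y ω' ≤ X ω}).toReal) μ :=
    (integrable_const (1 : ℝ)).mono'
      ((hgmeas_m.mono hm le_rfl).aestronglyMeasurable) (ae_of_all _ hgbdd)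
  refine (ae_eq_condExp_of_forall_setIntegral_eq hm hfind
    (fun s _ _ => hgint.integrableOn) (fun A hA hμA => ?_)
    (hgmeas_m.stronglyMeasurable.aestronglyMeasurable)).symm
  have h1 : (∫ ω in A, (if Y ω ≤ X ω then (1 : ℝ) else 0) ∂μ) = (μ (A ∩ T)).toReal := by
    have hrw : (∫ ω in A, (if Y ω ≤ X ω then (1 : ℝ) else 0) ∂μ)
        = ∫ ω in A, T.indicator (fun _ => (1 : ℝ)) ω ∂μ := by
      rw [hITE]
    rw [hrw, integral_indicator hT, setIntegral_const, measureReal_restrict_apply hT,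
      smul_eq_mul, mul_one, Set.inter_comm, measureReal_def]
  have h2 : (∫ ω in A, (μ {ω' | Y ω' ≤ X ω}).toReal ∂μ)
      = (∫⁻ ω in A, G (X ω) ∂μ).toReal :=
    integral_toReal ((hGmeas.comp hXm0).aemeasurable)
      (ae_of_all _ fun ω => lt_of_le_of_lt (hGle _) ENNReal.one_lt_top)
  rw [h1, h2, ← hstar A hA]

/-- equation (25) of the paper.
For the GRP-TB-KP innovation
`s̃_{k+1} = β(1−(p+q))((1−(p+q))F_k(C − θ̂_kᵀφ_k) + q − s_{k+1})`, with `θ̂_k`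
being `ℱ_k`-measurable, one has a.s.
`E[s̃_{k+1} | ℱ_k] = β(1−p−q)² (F_k(C − φ_kᵀθ̂_k) − F_k(C − φ_kᵀθ))`. -/
theorem grp_tb_kp_innovation_conditional_mean
    {Ω : Type*} {m0 : MeasurableSpace Ω} {μ : Measure Ω} [IsProbabilityMeasure μ]
    {d : ℕ} (ℱ : Filtration ℕ m0)
    (θ : EuclideanSpace ℝ (Fin d))
    (φ : ℕ → Ω → EuclideanSpace ℝ (Fin d))
    (hφmeas : ∀ k, StronglyMeasurable[ℱ k] (φ k))
    (w : ℕ → Ω → ℝ) (hwmeas : ∀ k, Measurable[ℱ k] (w k))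
    (y : ℕ → Ω → ℝ) (hy : ∀ k ω, y (k + 1) ω = ⟪φ k ω, θ⟫ + w (k + 1) ω)
    (C : ℝ) (s0 : ℕ → Ω → ℝ)
    (hs0 : ∀ k ω, s0 (k + 1) ω = if y (k + 1) ω ≤ C then 1 else 0)
    (p q : ℝ) (hp0 : 0 ≤ p) (hp1 : p < 1) (hq0 : 0 ≤ q) (hq1 : q < 1)
    (s : ℕ → Ω → ℝ)
    (hsmeas : ∀ k, Measurable[ℱ (k + 1)] (s (k + 1)))
    (hsval : ∀ k ω, s (k + 1) ω = 0 ∨ s (k + 1) ω = 1)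
    (htamp_p : ∀ k,
      μ[fun ω => (if s (k + 1) ω = 0 then (1 : ℝ) else 0) * s0 (k + 1) ω | ℱ k]
        =ᵐ[μ] fun ω => p * (μ[fun ω' => s0 (k + 1) ω' | ℱ k]) ω)
    (htamp_q : ∀ k,
      μ[fun ω => s (k + 1) ω * (1 - s0 (k + 1) ω) | ℱ k]
        =ᵐ[μ] fun ω => q * (μ[fun ω' => 1 - s0 (k + 1) ω' | ℱ k]) ω)
    (F : ℕ → ℝ → ℝ)
    (hF : ∀ k x, μ[fun ω => (if w (k + 1) ω ≤ x then (1 : ℝ) else 0) | ℱ k]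
        =ᵐ[μ] fun _ => F k x)
    (β : ℝ) (hβ : 0 < β)
    (θh : ℕ → Ω → EuclideanSpace ℝ (Fin d))
    (hθhmeas : ∀ k, StronglyMeasurable[ℱ k] (θh k)) :
    ∀ k : ℕ,
      μ[fun ω => β * (1 - (p + q)) *
          ((1 - (p + q)) * F k (C - ⟪φ k ω, θh k ω⟫) + q - s (k + 1) ω) | ℱ k]
        =ᵐ[μ] fun ω => β * (1 - p - q) ^ 2 *
          (F k (C - ⟪φ k ω, θh k ω⟫) - F k (C - ⟪φ k ω, θ⟫)) := by
  intro k
  have hm : ℱ k ≤ m0 := ℱ.le k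
  have hbddInt : ∀ (f : Ω → ℝ) (B : ℝ), AEStronglyMeasurable f μ →
      (∀ ω, ‖f ω‖ ≤ B) → Integrable f μ := fun f B hf hb =>
    (integrable_const B).mono' hf (ae_of_all _ hb)
  have hw1 : Measurable (w (k + 1)) := (hwmeas (k + 1)).mono (ℱ.le (k + 1)) le_rfl
  have hTx : ∀ x : ℝ, MeasurableSet {ω | w (k + 1) ω ≤ x} := fun x =>
    measurableSet_le hw1 measurable_const
  have hite : ∀ x : ℝ, (fun ω => if w (k + 1) ω ≤ x then (1 : ℝ) else 0)
      = ({ω | w (k + 1) ω ≤ x}).indicator (fun _ => 1) := by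
    intro x
    funext ω
    simp [Set.indicator_apply]
  have hfint : ∀ x : ℝ, Integrable (fun ω => if w (k + 1) ω ≤ x then (1 : ℝ) else 0) μ := by
    intro x
    rw [hite x]
    exact (integrable_const 1).indicator (hTx x)
  have hintTx : ∀ (x : ℝ) (A : Set Ω), MeasurableSet A →
      (∫ ω in A, (if w (k + 1) ω ≤ x then (1 : ℝ) else 0) ∂μ)
        = (μ (A ∩ {ω | w (k + 1) ω ≤ x})).toReal := by
    intro x A hA
    have hrw : (∫ ω in A, (if w (k + 1) ω ≤ x then (1 : ℝ) else 0) ∂μ)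
        = ∫ ω in A, ({ω | w (k + 1) ω ≤ x}).indicator (fun _ => (1 : ℝ)) ω ∂μ := by
      rw [hite x]
    rw [hrw, integral_indicator (hTx x), setIntegral_const,
      measureReal_restrict_apply (hTx x), smul_eq_mul, mul_one, Set.inter_comm, measureReal_def]
  have hFval : ∀ x : ℝ, F k x = (μ {ω | w (k + 1) ω ≤ x}).toReal := by
    intro x
    have h1 := integral_condExp (μ := μ) (f := fun ω => if w (k + 1) ω ≤ x then (1 : ℝ) else 0) hm
    have h2 : ∫ ω, (μ[fun ω => if w (k + 1) ω ≤ x then (1 : ℝ) else 0 | ℱ k]) ω ∂μ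
        = F k x := by
      rw [integral_congr_ae (hF k x)]
      simp
    have h3 := hintTx x Set.univ MeasurableSet.univ
    rw [Measure.restrict_univ, Set.univ_inter] at h3
    rw [← h2, h1, h3]
  have hind : ∀ (x : ℝ) (A : Set Ω), MeasurableSet[ℱ k] A →
      μ (A ∩ {ω | w (k + 1) ω ≤ x}) = μ {ω | w (k + 1) ω ≤ x} * μ A := by
    intro x A hA
    have h1 := setIntegral_condExp hm (hfint x) hA
    have h2 : ∫ ω in A, (μ[fun ω => if w (k + 1) ω ≤ x then (1 : ℝ) else 0 | ℱ k]) ω ∂μ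
        = (μ A).toReal * F k x := by
      rw [setIntegral_congr_ae (hm _ hA) ((hF k x).mono fun ω hω _ => hω),
        setIntegral_const, smul_eq_mul, measureReal_def]
    have h3 := hintTx x A (hm _ hA)
    have h4 : (μ (A ∩ {ω | w (k + 1) ω ≤ x})).toReal
        = (μ {ω | w (k + 1) ω ≤ x} * μ A).toReal := by
      rw [← h3, ← h1, h2, ENNReal.toReal_mul, hFval x]
      ring
    exact (ENNReal.toReal_eq_toReal_iff' (measure_ne_top μ _)
      (ENNReal.mul_ne_top (measure_ne_top μ _) (measure_ne_top μ _))).mp h4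
  -- F k is monotone, bounded
  have hFkmono : Monotone (F k) := by
    intro a b hab
    rw [hFval a, hFval b]
    exact ENNReal.toReal_mono (measure_ne_top μ _)
      (measure_mono fun ω h => le_trans h hab)
  have hFkmeas : Measurable (F k) := hFkmono.measurable
  have hFkbdd : ∀ x, ‖F k x‖ ≤ 1 := by
    intro x
    rw [hFval x, Real.norm_eq_abs, abs_of_nonneg ENNReal.toReal_nonneg]
    have h1 : (μ {ω | w (k + 1) ω ≤ x}).toReal ≤ (1 : ℝ≥0∞).toReal :=
      ENNReal.toReal_mono ENNReal.one_ne_top prob_le_one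
    simpa using h1
  -- conditional expectation of s0
  have hXθ : Measurable[ℱ k] fun ω => C - ⟪φ k ω, θ⟫ :=
    measurable_const.sub ((hφmeas k).inner stronglyMeasurable_const).measurable
  have hs0eq : s0 (k + 1) = fun ω => if w (k + 1) ω ≤ C - ⟪φ k ω, θ⟫ then (1 : ℝ) else 0 := by
    funext ω
    rw [hs0 k ω, hy k ω]
    by_cases h : w (k + 1) ω ≤ C - ⟪φ k ω, θ⟫
    · rw [if_pos h, if_pos (by linarith)]
    · rw [if_neg h, if_neg (by intro hc; exact h (by linarith))]
  have hE0 := freeze_aux hm hw1 hind hXθ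
  have hFθfun : (fun ω => (μ {ω' | w (k + 1) ω' ≤ C - ⟪φ k ω, θ⟫}).toReal)
      = fun ω => F k (C - ⟪φ k ω, θ⟫) := funext fun ω => (hFval _).symm
  have hE0' : μ[s0 (k + 1) | ℱ k] =ᵐ[μ] fun ω => F k (C - ⟪φ k ω, θ⟫) := by
    rw [hs0eq]
    exact hFθfun ▸ hE0
  -- measurability and integrability of the pieces
  have hs0meas : Measurable (s0 (k + 1)) := by
    rw [hs0eq]
    exact Measurable.ite (measurableSet_le hw1 (hXθ.mono hm le_rfl))
      measurable_const measurable_const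
  have hs0val : ∀ ω, s0 (k + 1) ω = 0 ∨ s0 (k + 1) ω = 1 := by
    intro ω
    rw [hs0 k ω]
    by_cases h : y (k + 1) ω ≤ C
    · right; rw [if_pos h]
    · left; rw [if_neg h]
  have hs0bdd : ∀ ω, ‖s0 (k + 1) ω‖ ≤ 1 := by
    intro ω
    rcases hs0val ω with h | h <;> simp [h]
  have hsk : Measurable (s (k + 1)) := (hsmeas k).mono (ℱ.le (k + 1)) le_rfl
  have hsbdd : ∀ ω, ‖s (k + 1) ω‖ ≤ 1 := by
    intro ω
    rcases hsval k ω with h | h <;> simp [h]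
  have int_s0 : Integrable (s0 (k + 1)) μ :=
    hbddInt _ 1 hs0meas.aestronglyMeasurable hs0bdd
  have int_s : Integrable (s (k + 1)) μ :=
    hbddInt _ 1 hsk.aestronglyMeasurable hsbdd
  have hbmeas : Measurable fun ω => (if s (k + 1) ω = 0 then (1 : ℝ) else 0) * s0 (k + 1) ω :=
    (Measurable.ite (hsk (measurableSet_singleton 0)) measurable_const
      measurable_const).mul hs0meas
  have int_b : Integrable (fun ω => (if s (k + 1) ω = 0 then (1 : ℝ) else 0) * s0 (k + 1) ω) μ := by
    refine hbddInt _ 1 hbmeas.aestronglyMeasurable fun ω => ?_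
    rw [Real.norm_eq_abs, abs_mul]
    have h1 : |if s (k + 1) ω = 0 then (1 : ℝ) else 0| ≤ 1 := by
      split <;> norm_num
    have h2 : |s0 (k + 1) ω| ≤ 1 := hs0bdd ω
    nlinarith [abs_nonneg (s0 (k + 1) ω), abs_nonneg (if s (k + 1) ω = 0 then (1 : ℝ) else 0)]
  have hcmeas : Measurable fun ω => s (k + 1) ω * (1 - s0 (k + 1) ω) :=
    hsk.mul (measurable_const.sub hs0meas)
  have int_c : Integrable (fun ω => s (k + 1) ω * (1 - s0 (k + 1) ω)) μ := by
    refine hbddInt _ 1 hcmeas.aestronglyMeasurable fun ω => ?_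
    rw [Real.norm_eq_abs, abs_mul]
    have h1 : |s (k + 1) ω| ≤ 1 := hsbdd ω
    have h2 : |1 - s0 (k + 1) ω| ≤ 1 := by
      rcases hs0val ω with h | h <;> simp [h]
    nlinarith [abs_nonneg (s (k + 1) ω), abs_nonneg (1 - s0 (k + 1) ω)]
  -- decomposition of s
  have hdecomp : s (k + 1) = (fun ω => s0 (k + 1) ω
        - (if s (k + 1) ω = 0 then (1 : ℝ) else 0) * s0 (k + 1) ω)
      + fun ω => s (k + 1) ω * (1 - s0 (k + 1) ω) := by
    funext ω
    simp only [Pi.add_apply]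
    rcases hsval k ω with h | h <;> rw [h] <;> simp <;> ring
  -- conditional expectation of 1 - s0
  have honesub : (fun ω' => 1 - s0 (k + 1) ω') = (fun _ => (1 : ℝ)) - s0 (k + 1) := rfl
  have hcond1s0 : μ[fun ω' => 1 - s0 (k + 1) ω' | ℱ k]
      =ᵐ[μ] fun ω => 1 - (μ[s0 (k + 1) | ℱ k]) ω := by
    rw [honesub]
    refine (condExp_sub (integrable_const 1) int_s0 (ℱ k)).trans ?_
    have h1 : μ[fun _ => (1 : ℝ) | ℱ k] = fun _ => (1 : ℝ) := condExp_const hm 1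
    rw [h1]
    exact Filter.EventuallyEq.rfl
  -- conditional expectation of s
  have hconds : μ[s (k + 1) | ℱ k]
      =ᵐ[μ] fun ω => (1 - p - q) * F k (C - ⟪φ k ω, θ⟫) + q := by
    have f1 : μ[s (k + 1) | ℱ k] =ᵐ[μ]
        μ[(fun ω => s0 (k + 1) ω
            - (if s (k + 1) ω = 0 then (1 : ℝ) else 0) * s0 (k + 1) ω) | ℱ k]
          + μ[(fun ω => s (k + 1) ω * (1 - s0 (k + 1) ω)) | ℱ k] := by
      conv_lhs => rw [hdecomp]
      exact condExp_add (int_s0.sub int_b) int_c (ℱ k)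
    have hsubeq : (fun ω => s0 (k + 1) ω
        - (if s (k + 1) ω = 0 then (1 : ℝ) else 0) * s0 (k + 1) ω)
        = s0 (k + 1) - fun ω => (if s (k + 1) ω = 0 then (1 : ℝ) else 0) * s0 (k + 1) ω := rfl
    have f2 : μ[(fun ω => s0 (k + 1) ω
          - (if s (k + 1) ω = 0 then (1 : ℝ) else 0) * s0 (k + 1) ω) | ℱ k] =ᵐ[μ]
        μ[s0 (k + 1) | ℱ k]
          - μ[(fun ω => (if s (k + 1) ω = 0 then (1 : ℝ) else 0) * s0 (k + 1) ω) | ℱ k] := by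
      rw [hsubeq]
      exact condExp_sub int_s0 int_b (ℱ k)
    have f3 := htamp_p k
    have f4 : μ[(fun ω => s (k + 1) ω * (1 - s0 (k + 1) ω)) | ℱ k]
        =ᵐ[μ] fun ω => q * (1 - (μ[s0 (k + 1) | ℱ k]) ω) := by
      refine (htamp_q k).trans ?_
      filter_upwards [hcond1s0] with ω hω
      simp only [hω]
    filter_upwards [f1, f2, f3, f4, hE0'] with ω h1 h2 h3 h4 h5
    rw [h1, Pi.add_apply, h2, Pi.sub_apply, h3, h4, h5]
    ring
  -- the θ̂ part is ℱ k-measurable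
  have hFh_meas_m : Measurable[ℱ k] fun ω => F k (C - ⟪φ k ω, θh k ω⟫) :=
    hFkmeas.comp (measurable_const.sub ((hφmeas k).inner (hθhmeas k)).measurable)
  set g1 : Ω → ℝ := fun ω => β * (1 - (p + q)) *
    ((1 - (p + q)) * F k (C - ⟪φ k ω, θh k ω⟫) + q) with hg1def
  have hg1meas_m : Measurable[ℱ k] g1 :=
    ((hFh_meas_m.const_mul _).add_const _).const_mul _
  have hg1bdd : ∀ ω, ‖g1 ω‖ ≤ |β * (1 - (p + q))| * (|1 - (p + q)| + |q|) := by
    intro ω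
    rw [hg1def, Real.norm_eq_abs, abs_mul]
    refine mul_le_mul_of_nonneg_left ?_ (abs_nonneg _)
    calc |(1 - (p + q)) * F k (C - ⟪φ k ω, θh k ω⟫) + q|
        ≤ |(1 - (p + q)) * F k (C - ⟪φ k ω, θh k ω⟫)| + |q| := abs_add_le _ _
      _ ≤ |1 - (p + q)| * 1 + |q| := by
          rw [abs_mul]
          have h1 := hFkbdd (C - ⟪φ k ω, θh k ω⟫)
          rw [Real.norm_eq_abs] at h1
          nlinarith [abs_nonneg (1 - (p + q))]
      _ = |1 - (p + q)| + |q| := by ring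
  have hg1int : Integrable g1 μ :=
    hbddInt _ _ ((hg1meas_m.mono hm le_rfl).aestronglyMeasurable) hg1bdd
  have hg2int : Integrable (fun ω => β * (1 - (p + q)) * s (k + 1) ω) μ :=
    int_s.const_mul _
  have ht_eq : (fun ω => β * (1 - (p + q)) *
      ((1 - (p + q)) * F k (C - ⟪φ k ω, θh k ω⟫) + q - s (k + 1) ω))
      = g1 - fun ω => β * (1 - (p + q)) * s (k + 1) ω := by
    funext ω
    simp only [Pi.sub_apply, hg1def]
    ring
  rw [ht_eq]
  have hcsub := condExp_sub (μ := μ) (m := ℱ k) hg1int hg2int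
  have hcg1 : μ[g1 | ℱ k] = g1 :=
    condExp_of_stronglyMeasurable hm hg1meas_m.stronglyMeasurable hg1int
  have hsmul : (fun ω => β * (1 - (p + q)) * s (k + 1) ω)
      = (β * (1 - (p + q))) • s (k + 1) := rfl
  have hcg2 : μ[(fun ω => β * (1 - (p + q)) * s (k + 1) ω) | ℱ k]
      =ᵐ[μ] (β * (1 - (p + q))) • μ[s (k + 1) | ℱ k] := by
    rw [hsmul]
    exact condExp_smul _ _ (ℱ k)
  filter_upwards [hcsub, hcg2, hconds] with ω h1 h2 h3
  rw [h1, Pi.sub_apply, hcg1, h2, Pi.smul_apply, smul_eq_mul, h3, hg1def]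
  ring
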